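/- arXiv:1904.07985 — 2 statements merged into one kernel-verified Lean document; each statement's English description precedes it below -/
import Mathlib

section
/- Let I = {i₁↔i₂, i₂↔i₃, …, i_{q−1}↔i_q} be a cycle interval in the subgraph G_P traversed by a path P. Then among the interior vertices i₂, i₃, …, i_{q−1} there is at most one splitting point. -/
/-- An edge `e` of a graph `H` is a *cycle edge* if it belongs to some cycle of `H`. -/
def SimpleGraph.IsCycleEdge {V : Type*} (H : SimpleGraph V) (e : Sym2 V) : Prop :=
  ∃ (v : V) (c : H.Walk v v), c.IsCycle ∧ e ∈ c.edges

/-- The subgraph `G_P` traversed by the first `m` steps of the path `P`. -/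
def pathGraph {V : Type*} (P : ℕ → V) (m : ℕ) : SimpleGraph V :=
  SimpleGraph.fromEdgeSet {e | ∃ t < m, e = s(P t, P (t + 1))}

/-- A vertex `v` is a *cycle meeting point* of `H` if it is incident to at least three
cycle edges of `H`. -/
def CycleMeetingPoint {V : Type*} (H : SimpleGraph V) (v : V) : Prop :=
  ∃ i j u : V, i ≠ j ∧ i ≠ u ∧ j ≠ u ∧
    H.IsCycleEdge s(v, i) ∧ H.IsCycleEdge s(v, j) ∧ H.IsCycleEdge s(v, u)

/-- The edge `i↔j` is *uncovered in the direction `i → j`* by the length-`m` path `P`: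
the first traversal of this edge by `P` goes from `i` to `j`. -/
def UncovTo {V : Type*} (P : ℕ → V) (m : ℕ) (i j : V) : Prop :=
  ∃ t < m, P t = i ∧ P (t + 1) = j ∧ ∀ t' < t, s(P t', P (t' + 1)) ≠ s(i, j)

/-- A vertex `v` is a *splitting point* of the subgraph traversed by the length-`m` path `P`
if there are distinct vertices `i ≠ j` with `v↔i`, `v↔j` cycle edges of `G_P`, both
uncovered in the direction away from `v`. -/
def SplittingPoint {V : Type*} (P : ℕ → V) (m : ℕ) (v : V) : Prop :=
  ∃ i j : V, i ≠ j ∧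
    (pathGraph P m).IsCycleEdge s(v, i) ∧ (pathGraph P m).IsCycleEdge s(v, j) ∧
    UncovTo P m v i ∧ UncovTo P m v j

section Aux

variable {V : Type*}

private lemma head_ne_getLast_of_nodup {α : Type*} {l : List α} (h : l.Nodup)
    (hl : 2 ≤ l.length) (h1 : l ≠ []) : l.head h1 ≠ l.getLast h1 := by
  match l with
  | [] => simp at h1
  | [a] => simp at hl
  | a :: b :: t =>
    rw [List.head_cons, List.getLast_cons (by simp : (b :: t : List α) ≠ [])]
    intro hEq
    have hmem : (b :: t).getLast (by simp) ∈ b :: t := List.getLast_mem _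
    rw [← hEq] at hmem
    exact (List.nodup_cons.mp h).1 hmem

/-- Every vertex on a cycle has two distinct neighbours along the cycle. -/
private lemma cycle_two_nbrs {H : SimpleGraph V} {v : V} (c : H.Walk v v)
    (hc : c.IsCycle) :
    ∃ y₁ y₂ : V, y₁ ≠ y₂ ∧ s(v, y₁) ∈ c.edges ∧ s(v, y₂) ∈ c.edges := by
  have hlen : 3 ≤ c.length := hc.three_le_length
  have hD : c.darts ≠ [] := by
    intro h
    have h2 := c.length_darts
    rw [h] at h2
    simp at h2
    omega
  have hedges : c.edges = c.darts.map SimpleGraph.Dart.edge := rfl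
  refine ⟨(c.darts.head hD).snd, (c.darts.getLast hD).fst, ?_, ?_, ?_⟩
  · -- the two neighbours are distinct
    have htlen : c.support.tail.length = c.length := by
      rw [List.length_tail, c.length_support]
      omega
    have htne : c.support.tail ≠ [] := by
      intro h
      rw [h] at htlen
      simp at htlen
      omega
    have hdne : c.support.tail.dropLast ≠ [] := by
      intro h
      have h2 := congrArg List.length h
      rw [List.length_dropLast, htlen] at h2
      simp at h2
      omega
    have h1 : c.support.tail.head htne = (c.darts.head hD).snd := by
      have e1 : c.support.tail.head? = some ((c.darts.head hD).snd) := by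
        rw [← c.map_snd_darts, List.head?_map, List.head?_eq_head hD]
        rfl
      rw [List.head?_eq_head htne] at e1
      exact Option.some.inj e1
    have hz2 : c.support.dropLast.getLast? = some ((c.darts.getLast hD).fst) := by
      rw [← c.map_fst_darts, List.getLast?_map, List.getLast?_eq_getLast hD]
      rfl
    have hsupp : c.support.dropLast = v :: c.support.tail.dropLast := by
      conv_lhs => rw [c.support_eq_cons]
      rw [List.dropLast_cons_of_ne_nil htne]
    have h2 : (c.darts.getLast hD).fst = c.support.tail.dropLast.getLast hdne := by
      have e3 : c.support.dropLast.getLast? =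
          some (c.support.tail.dropLast.getLast hdne) := by
        rw [hsupp, List.getLast?_eq_getLast (by simp), List.getLast_cons hdne]
      rw [hz2] at e3
      exact Option.some.inj e3
    have h4 : c.support.tail.head htne = c.support.tail.dropLast.head hdne := by
      rw [List.head_dropLast]
    have hnodup : c.support.tail.dropLast.Nodup :=
      hc.support_nodup.sublist (List.dropLast_sublist _)
    have hdlen : 2 ≤ c.support.tail.dropLast.length := by
      rw [List.length_dropLast, htlen]; omega
    rw [← h1, h4, h2]
    exact head_ne_getLast_of_nodup hnodup hdlen hdne
  · -- first edge
    have hmem : c.darts.head hD ∈ c.darts := List.head_mem hD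
    have hin : (c.darts.head hD).edge ∈ c.edges := by
      rw [hedges]; exact List.mem_map_of_mem hmem
    have heq : (c.darts.head hD).edge = s(v, (c.darts.head hD).snd) := by
      have hfst : (c.darts.head hD).fst = v := by rw [c.head_darts_eq_firstDart hD]; rfl
      have h0 : (c.darts.head hD).edge
          = s((c.darts.head hD).fst, (c.darts.head hD).snd) := rfl
      rw [hfst] at h0
      exact h0
    rwa [heq] at hin
  · -- last edge
    have hmem : c.darts.getLast hD ∈ c.darts := List.getLast_mem hD
    have hin : (c.darts.getLast hD).edge ∈ c.edges := by
      rw [hedges]; exact List.mem_map_of_mem hmem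
    have heq : (c.darts.getLast hD).edge = s((c.darts.getLast hD).fst, v) := by
      have hsnd : (c.darts.getLast hD).snd = v := by rw [c.getLast_darts_eq_lastDart hD]; rfl
      have h0 : (c.darts.getLast hD).edge
          = s((c.darts.getLast hD).fst, (c.darts.getLast hD).snd) := rfl
      rw [hsnd] at h0
      exact h0
    rw [Sym2.eq_swap]
    rwa [heq] at hin

private lemma cycleEdge_adj {H : SimpleGraph V} {x y : V}
    (h : H.IsCycleEdge s(x, y)) : H.Adj x y := by
  obtain ⟨v, c, -, he⟩ := h
  exact c.adj_of_mem_edges he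

variable (m : ℕ) (P : ℕ → V) (q : ℕ) (f : ℕ → V)

/-- At an interior vertex of the interval, the only possible cycle-neighbours are the two
interval neighbours. -/
private lemma only_two_nbrs
    (hdistinct : ∀ t < q - 1, ∀ t' < q - 1,
      s(f t, f (t + 1)) = s(f t', f (t' + 1)) → t = t')
    (hcyc : ∀ t < q - 1, (pathGraph P m).IsCycleEdge s(f t, f (t + 1)))
    (hinterior : ∀ t, 1 ≤ t → t + 2 ≤ q →
      ¬ CycleMeetingPoint (pathGraph P m) (f t))
    (a : ℕ) (ha1 : 1 ≤ a) (ha2 : a + 2 ≤ q) :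
    ∀ z, (pathGraph P m).IsCycleEdge s(f a, z) → z = f (a - 1) ∨ z = f (a + 1) := by
  have ha1' : a - 1 + 1 = a := by omega
  have hEprev : (pathGraph P m).IsCycleEdge s(f a, f (a - 1)) := by
    have h := hcyc (a - 1) (by omega)
    rw [ha1'] at h
    rwa [Sym2.eq_swap] at h
  have hEnext : (pathGraph P m).IsCycleEdge s(f a, f (a + 1)) := hcyc a (by omega)
  have hne_pm : f (a - 1) ≠ f (a + 1) := by
    intro h
    have heq : s(f (a - 1), f (a - 1 + 1)) = s(f a, f (a + 1)) := by
      rw [ha1', h]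
      exact Sym2.eq_swap
    have := hdistinct (a - 1) (by omega) a (by omega) heq
    omega
  intro z hz
  by_contra hcon
  push_neg at hcon
  exact hinterior a ha1 ha2
    ⟨z, f (a - 1), f (a + 1), hcon.1, hcon.2, hne_pm, hz, hEprev, hEnext⟩

/-- An interior splitting point has both of its interval edges uncovered away from it. -/
private lemma splitting_unpack
    (hdistinct : ∀ t < q - 1, ∀ t' < q - 1,
      s(f t, f (t + 1)) = s(f t', f (t' + 1)) → t = t')
    (hcyc : ∀ t < q - 1, (pathGraph P m).IsCycleEdge s(f t, f (t + 1)))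
    (hinterior : ∀ t, 1 ≤ t → t + 2 ≤ q →
      ¬ CycleMeetingPoint (pathGraph P m) (f t))
    (a : ℕ) (ha1 : 1 ≤ a) (ha2 : a + 2 ≤ q)
    (hs : SplittingPoint P m (f a)) :
    UncovTo P m (f a) (f (a - 1)) ∧ UncovTo P m (f a) (f (a + 1)) := by
  obtain ⟨i, j, hij, hci, hcj, hui, huj⟩ := hs
  have honly := only_two_nbrs m P q f hdistinct hcyc hinterior a ha1 ha2
  rcases honly i hci with h1 | h1 <;> rcases honly j hcj with h2 | h2
  · exact absurd (h1.trans h2.symm) hij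
  · exact ⟨h1 ▸ hui, h2 ▸ huj⟩
  · exact ⟨h2 ▸ huj, h1 ▸ hui⟩
  · exact absurd (h1.trans h2.symm) hij

/-- If both edges at `v` towards `i` and `j` are uncovered away from `v`, then the start
of the path is reachable from `v` avoiding those two edges. -/
private lemma reach_start (v i j : V)
    (h1 : UncovTo P m v i) (h2 : UncovTo P m v j) :
    ((pathGraph P m).deleteEdges {s(v, i), s(v, j)}).Reachable v (P 0) := by
  obtain ⟨t1, ht1, hp1, -, hmin1⟩ := h1
  obtain ⟨t2, ht2, hp2, -, hmin2⟩ := h2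
  have key : ∀ t, t ≤ min t1 t2 →
      ((pathGraph P m).deleteEdges {s(v, i), s(v, j)}).Reachable v (P t) →
      ((pathGraph P m).deleteEdges {s(v, i), s(v, j)}).Reachable v (P 0) := by
    intro t
    induction t with
    | zero => exact fun _ h => h
    | succ n ih =>
      intro hle hr
      have hn : n < m := by omega
      by_cases hEq : P n = P (n + 1)
      · exact ih (by omega) (by rwa [hEq])
      · have hnot : s(P n, P (n + 1)) ∉ ({s(v, i), s(v, j)} : Set (Sym2 V)) := by
          simp only [Set.mem_insert_iff, Set.mem_singleton_iff]
          push_neg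
          exact ⟨hmin1 n (by omega), hmin2 n (by omega)⟩
        have hadj : (pathGraph P m).Adj (P n) (P (n + 1)) :=
          (SimpleGraph.fromEdgeSet_adj _).mpr ⟨⟨n, hn, rfl⟩, hEq⟩
        have hadj' := SimpleGraph.deleteEdges_adj.mpr ⟨hadj, hnot⟩
        exact ih (by omega) (hr.trans hadj'.symm.reachable)
  have hPv : P (min t1 t2) = v := by
    rcases le_total t1 t2 with h | h
    · rw [min_eq_left h]; exact hp1
    · rw [min_eq_right h]; exact hp2
  exact key _ le_rfl (by rw [hPv])

/-- The main contradiction: one interior vertex of the interval cannot be connected to a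
distinct interior vertex avoiding both of its interval edges. -/
private lemma helper_contra [DecidableEq V]
    (hdistinct : ∀ t < q - 1, ∀ t' < q - 1,
      s(f t, f (t + 1)) = s(f t', f (t' + 1)) → t = t')
    (hcyc : ∀ t < q - 1, (pathGraph P m).IsCycleEdge s(f t, f (t + 1)))
    (hinterior : ∀ t, 1 ≤ t → t + 2 ≤ q →
      ¬ CycleMeetingPoint (pathGraph P m) (f t))
    (a b : ℕ) (ha1 : 1 ≤ a) (ha2 : a + 2 ≤ q) (hb1 : 1 ≤ b) (hb2 : b + 2 ≤ q)
    (hab : a ≠ b)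
    (hreach : ((pathGraph P m).deleteEdges
        {s(f a, f (a - 1)), s(f a, f (a + 1))}).Reachable (f a) (f b)) :
    False := by
  set H := pathGraph P m with hH
  have honly := only_two_nbrs m P q f hdistinct hcyc hinterior a ha1 ha2
  have ha1' : a - 1 + 1 = a := by omega
  -- edges of the interval distinct from the two edges at `f a` are edges of the
  -- two-edge-deleted graph
  have hstep : ∀ t, t < q - 1 → t ≠ a - 1 → t ≠ a →
      (H.deleteEdges {s(f a, f (a - 1)), s(f a, f (a + 1))}).Adj (f t) (f (t + 1)) := by
    intro t ht hne1 hne2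
    refine SimpleGraph.deleteEdges_adj.mpr ⟨cycleEdge_adj (hcyc t ht), ?_⟩
    simp only [Set.mem_insert_iff, Set.mem_singleton_iff]
    push_neg
    constructor
    · intro h
      have heq : s(f t, f (t + 1)) = s(f (a - 1), f (a - 1 + 1)) := by
        rw [ha1', h]
        exact Sym2.eq_swap
      exact hne1 (hdistinct t ht (a - 1) (by omega) heq)
    · intro h
      exact hne2 (hdistinct t ht a (by omega) h)
  -- the final contradiction, with `w` the interval neighbour of `f a` that is reached and
  -- `z` the other one
  have ending : ∀ w z : V, w ≠ z → H.Adj (f a) w →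
      (∀ y, H.IsCycleEdge s(f a, y) → y = w ∨ y = z) →
      (H.deleteEdges {s(f a, w), s(f a, z)}).Reachable (f a) w → False := by
    intro w z hwz hadj honly2 hr
    have hAdj'' : (H.deleteEdges {s(f a, z)}).Adj (f a) w := by
      refine SimpleGraph.deleteEdges_adj.mpr ⟨hadj, ?_⟩
      simp only [Set.mem_singleton_iff]
      intro h
      exact hwz (Sym2.congr_right.mp h)
    have hreach'' : ((H.deleteEdges {s(f a, z)}) \
        SimpleGraph.fromEdgeSet {s(f a, w)}).Reachable (f a) w := by
      have hEq : (H.deleteEdges {s(f a, z)}) \ SimpleGraph.fromEdgeSet {s(f a, w)} =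
          H.deleteEdges {s(f a, w), s(f a, z)} := by
        show (H.deleteEdges {s(f a, z)}).deleteEdges {s(f a, w)} = _
        rw [SimpleGraph.deleteEdges_deleteEdges]
        congr 1
        rw [Set.union_comm]
        rfl
      rw [hEq]
      exact hr
    obtain ⟨u, c, hc, hce⟩ :=
      (SimpleGraph.adj_and_reachable_delete_edges_iff_exists_cycle).mp ⟨hAdj'', hreach''⟩
    have hsub : ∀ e ∈ c.edges, e ∈ H.edgeSet := by
      intro e he
      have h1 := c.edges_subset_edgeSet he
      rw [SimpleGraph.edgeSet_deleteEdges] at h1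
      exact h1.1
    set cH := c.transfer H hsub with hcHdef
    have hcH : cH.IsCycle := hc.transfer hsub
    have hceH : s(f a, w) ∈ cH.edges := by
      rw [hcHdef, SimpleGraph.Walk.edges_transfer]
      exact hce
    have hzH : s(f a, z) ∉ cH.edges := by
      rw [hcHdef, SimpleGraph.Walk.edges_transfer]
      intro h
      have h1 := c.edges_subset_edgeSet h
      rw [SimpleGraph.edgeSet_deleteEdges] at h1
      exact h1.2 rfl
    have hvsup : f a ∈ cH.support := cH.fst_mem_support_of_mem_edges hceH
    have hc' : (cH.rotate (f a) hvsup).IsCycle := hcH.rotate hvsup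
    have hmemiff : ∀ e, e ∈ (cH.rotate (f a) hvsup).edges ↔ e ∈ cH.edges := by
      intro e
      exact (cH.rotate_edges (f a) hvsup).mem_iff
    obtain ⟨y₁, y₂, hyy, hy1, hy2⟩ := cycle_two_nbrs (cH.rotate (f a) hvsup) hc'
    have hcyc1 : H.IsCycleEdge s(f a, y₁) := ⟨f a, cH.rotate (f a) hvsup, hc', hy1⟩
    have hcyc2 : H.IsCycleEdge s(f a, y₂) := ⟨f a, cH.rotate (f a) hvsup, hc', hy2⟩
    rcases honly2 y₁ hcyc1 with h1 | h1 <;> rcases honly2 y₂ hcyc2 with h2 | h2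
    · exact hyy (h1.trans h2.symm)
    · exact hzH ((hmemiff _).mp (h2 ▸ hy2))
    · exact hzH ((hmemiff _).mp (h1 ▸ hy1))
    · exact hyy (h1.trans h2.symm)
  rcases Nat.lt_or_ge a b with hlt | hge
  · -- `a < b`: connect `f (a+1)` to `f b` along the interval
    have hup : ∀ t, a + 1 ≤ t → t ≤ b →
        (H.deleteEdges {s(f a, f (a - 1)), s(f a, f (a + 1))}).Reachable
          (f (a + 1)) (f t) := by
      intro t
      induction t with
      | zero => intro h _; exact absurd h (by omega)
      | succ n ih =>
        intro h1 h2
        rcases Nat.lt_or_ge (a + 1) (n + 1) with hlt2 | hge2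
        · have hadj := hstep n (by omega) (by omega) (by omega)
          exact (ih (by omega) (by omega)).trans hadj.reachable
        · have h3 : a + 1 = n + 1 := by omega
          rw [← h3]
    have hr2 : (H.deleteEdges {s(f a, f (a - 1)), s(f a, f (a + 1))}).Reachable
        (f a) (f (a + 1)) := hreach.trans (hup b (by omega) le_rfl).symm
    refine ending (f (a + 1)) (f (a - 1)) ?_ ?_ ?_ ?_
    · intro h
      have heq : s(f (a - 1), f (a - 1 + 1)) = s(f a, f (a + 1)) := by
        rw [ha1', ← h]
        exact Sym2.eq_swap
      have := hdistinct (a - 1) (by omega) a (by omega) heq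
      omega
    · exact cycleEdge_adj (hcyc a (by omega))
    · intro y hy
      exact (honly y hy).symm
    · have hEq : ({s(f a, f (a + 1)), s(f a, f (a - 1))} : Set (Sym2 V)) =
          {s(f a, f (a - 1)), s(f a, f (a + 1))} := Set.pair_comm _ _
      rw [hEq]
      exact hr2
  · -- `b < a`: connect `f (a-1)` to `f b` along the interval
    have hba : b < a := by omega
    have hdown : ∀ d, d ≤ a - 1 - b →
        (H.deleteEdges {s(f a, f (a - 1)), s(f a, f (a + 1))}).Reachable
          (f (a - 1)) (f (a - 1 - d)) := by
      intro d
      induction d with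
      | zero => intro _; rw [Nat.sub_zero]
      | succ n ih =>
        intro h
        have hadj := hstep (a - 1 - (n + 1)) (by omega) (by omega) (by omega)
        have ht1 : a - 1 - (n + 1) + 1 = a - 1 - n := by omega
        rw [ht1] at hadj
        exact (ih (by omega)).trans hadj.symm.reachable
    have hb' : a - 1 - (a - 1 - b) = b := by omega
    have hdownb := hdown (a - 1 - b) le_rfl
    rw [hb'] at hdownb
    have hr2 : (H.deleteEdges {s(f a, f (a - 1)), s(f a, f (a + 1))}).Reachable
        (f a) (f (a - 1)) := hreach.trans hdownb.symm
    refine ending (f (a - 1)) (f (a + 1)) ?_ ?_ ?_ hr2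
    · intro h
      have heq : s(f (a - 1), f (a - 1 + 1)) = s(f a, f (a + 1)) := by
        rw [ha1', h]
        exact Sym2.eq_swap
      have := hdistinct (a - 1) (by omega) a (by omega) heq
      omega
    · have h := hcyc (a - 1) (by omega)
      rw [ha1'] at h
      exact (cycleEdge_adj h).symm
    · exact honly

end Aux

/-- Let `I = {i₁↔i₂, …, i_{q−1}↔i_q}` (encoded by `f : ℕ → V` and `q ≥ 2`)
be a cycle interval in the subgraph `G_P` traversed by a closed path `P` of length `2k`.
Then among the interior vertices `i₂, …, i_{q−1}` there is at most one splitting point. -/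
theorem stmt_5 {V : Type*} [Fintype V] [DecidableEq V] (G : SimpleGraph V)
    (k : ℕ) (P : ℕ → V)
    (hadj : ∀ t < 2 * k, G.Adj (P t) (P (t + 1)))
    (hclosed : P 0 = P (2 * k))
    (q : ℕ) (f : ℕ → V) (hq : 2 ≤ q)
    (hdistinct : ∀ t < q - 1, ∀ t' < q - 1,
      s(f t, f (t + 1)) = s(f t', f (t' + 1)) → t = t')
    (hcyc : ∀ t < q - 1, (pathGraph P (2 * k)).IsCycleEdge s(f t, f (t + 1)))
    (hinterior : ∀ t, 1 ≤ t → t + 2 ≤ q →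
      ¬ CycleMeetingPoint (pathGraph P (2 * k)) (f t))
    (hends : f 0 ≠ f (q - 1) →
      CycleMeetingPoint (pathGraph P (2 * k)) (f 0) ∧
      CycleMeetingPoint (pathGraph P (2 * k)) (f (q - 1))) :
    ({v | (∃ t, 1 ≤ t ∧ t + 2 ≤ q ∧ f t = v) ∧ SplittingPoint P (2 * k) v}).Subsingleton := by
  intro x hx y hy
  obtain ⟨⟨a, ha1, ha2, hfa⟩, hsx⟩ := hx
  obtain ⟨⟨b, hb1, hb2, hfb⟩, hsy⟩ := hy
  by_contra hne
  subst hfa hfb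
  -- both splitting points have their two interval edges uncovered away from them
  have hua := splitting_unpack (2 * k) P q f hdistinct hcyc hinterior a ha1 ha2 hsx
  have hub := splitting_unpack (2 * k) P q f hdistinct hcyc hinterior b hb1 hb2 hsy
  have hra := reach_start (2 * k) P (f a) (f (a - 1)) (f (a + 1)) hua.1 hua.2
  have hrb := reach_start (2 * k) P (f b) (f (b - 1)) (f (b + 1)) hub.1 hub.2
  obtain ⟨Wb⟩ := hrb
  by_cases hmem : f a ∈ Wb.support
  · exact helper_contra (2 * k) P q f hdistinct hcyc hinterior b a hb1 hb2 ha1 ha2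
      (fun h => hne (by rw [h])) ⟨Wb.takeUntil (f a) hmem⟩
  · refine helper_contra (2 * k) P q f hdistinct hcyc hinterior a b ha1 ha2 hb1 hb2
      (fun h => hne (by rw [h])) ?_
    have hsub : ∀ e ∈ Wb.edges,
        e ∈ ((pathGraph P (2 * k)).deleteEdges
          {s(f a, f (a - 1)), s(f a, f (a + 1))}).edgeSet := by
      intro e he
      have h1 := Wb.edges_subset_edgeSet he
      rw [SimpleGraph.edgeSet_deleteEdges] at h1 ⊢
      refine ⟨h1.1, ?_⟩
      intro hmem2
      simp only [Set.mem_insert_iff, Set.mem_singleton_iff] at hmem2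
      rcases hmem2 with h | h
      · exact hmem (Wb.fst_mem_support_of_mem_edges (h ▸ he))
      · exact hmem (Wb.fst_mem_support_of_mem_edges (h ▸ he))
    exact hra.trans (SimpleGraph.Reachable.symm ⟨Wb.transfer _ hsub⟩)
end

section
/- Let P be a closed path of length 2k on a graph G, and let H_P be the diagram associated to P. Then for every non-cycle edge e of the traversed subgraph G_P, the number of up-arrows in H_P corresponding to traversals of e equals the number of down-arrows corresponding to traversals of e. -/
/-- The edge travelled at step `t` of `P` has been travelled at some earlier step. -/
def TraveledBefore {V : Type*} (P : ℕ → V) (t : ℕ) : Prop :=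
  ∃ t' < t, s(P t', P (t' + 1)) = s(P t, P (t + 1))

/-- The first traversal of the edge travelled at step `t` was in the *same* direction,
i.e. the minimal step `t₀` traversing this edge has `P t₀ = P t`. -/
def FirstDirSame {V : Type*} (P : ℕ → V) (t : ℕ) : Prop :=
  ∀ t₀ < t, s(P t₀, P (t₀ + 1)) = s(P t, P (t + 1)) →
    (∀ t' < t₀, s(P t', P (t' + 1)) ≠ s(P t, P (t + 1))) → P t₀ = P t

/-- The first traversal of the edge travelled at step `t` was in the *opposite* direction. -/
def FirstDirOpp {V : Type*} (P : ℕ → V) (t : ℕ) : Prop :=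
  ∀ t₀ < t, s(P t₀, P (t₀ + 1)) = s(P t, P (t + 1)) →
    (∀ t' < t₀, s(P t', P (t' + 1)) ≠ s(P t, P (t + 1))) → P t₀ = P (t + 1)

/-- Let `P` be a closed path of length `2k` on a graph `G` and `H` the
diagram associated with `P` (defined by the four displayed rules). Then for every non-cycle
edge `e` of the traversed subgraph `G_P`, the number of up-arrows of `H` corresponding to
traversals of `e` equals the number of down-arrows corresponding to traversals of `e`. -/
theorem stmt_7 {V : Type*} [Fintype V] [DecidableEq V] (G : SimpleGraph V)
    (k : ℕ) (P : ℕ → V)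
    (hadj : ∀ t < 2 * k, G.Adj (P t) (P (t + 1)))
    (hclosed : P 0 = P (2 * k))
    (H : ℕ → ℤ) (hH0 : H 0 = 0)
    (hnew : ∀ t < 2 * k, ¬ TraveledBefore P t → H (t + 1) = H t + 1)
    (hfwd : ∀ t < 2 * k,
      ¬ (pathGraph P (2 * k)).IsCycleEdge s(P t, P (t + 1)) →
      TraveledBefore P t → FirstDirSame P t → H (t + 1) = H t + 1)
    (hbwd : ∀ t < 2 * k,
      ¬ (pathGraph P (2 * k)).IsCycleEdge s(P t, P (t + 1)) →
      TraveledBefore P t → FirstDirOpp P t → H (t + 1) = H t - 1)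
    (hcyc : ∀ t < 2 * k,
      (pathGraph P (2 * k)).IsCycleEdge s(P t, P (t + 1)) →
      TraveledBefore P t → H (t + 1) = H t - 1) :
    ∀ e ∈ (pathGraph P (2 * k)).edgeSet,
      ¬ (pathGraph P (2 * k)).IsCycleEdge e →
      ({t | t < 2 * k ∧ s(P t, P (t + 1)) = e ∧ H (t + 1) = H t + 1}).ncard
        = ({t | t < 2 * k ∧ s(P t, P (t + 1)) = e ∧ H (t + 1) = H t - 1}).ncard := by
  classical
  intro e he hnc
  have he' := he
  rw [pathGraph, SimpleGraph.edgeSet_fromEdgeSet] at he'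
  obtain ⟨hmem, hnd⟩ := he'
  obtain ⟨t₁, ht₁, he1⟩ := hmem
  set n := 2 * k with hn
  have hex : ∃ t, t < n ∧ s(P t, P (t + 1)) = e := ⟨t₁, ht₁, he1.symm⟩
  set t₀ := Nat.find hex with ht₀def
  obtain ⟨ht₀n, ht₀e⟩ := Nat.find_spec hex
  have huv : P t₀ ≠ P (t₀ + 1) := by
    intro h
    apply hnd
    rw [← ht₀e]
    exact Sym2.mk_isDiag_iff.mpr h
  have hmin : ∀ t' < t₀, s(P t', P (t' + 1)) ≠ e := by
    intro t' h' hc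
    exact Nat.find_min hex h' ⟨h'.trans ht₀n, hc⟩
  have hfirst : ∀ t, t < n → s(P t, P (t + 1)) = e →
      ∀ t₀', t₀' < t → s(P t₀', P (t₀' + 1)) = s(P t, P (t + 1)) →
      (∀ t' < t₀', s(P t', P (t' + 1)) ≠ s(P t, P (t + 1))) → t₀' = t₀ := by
    intro t htn hte t₀' h1 h2 h3
    have h2' : s(P t₀', P (t₀' + 1)) = e := h2.trans hte
    have hle : t₀ ≤ t₀' := Nat.find_le ⟨h1.trans htn, h2'⟩
    rcases eq_or_lt_of_le hle with h | h
    · exact h.symm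
    · exact absurd (ht₀e.trans hte.symm) (h3 t₀ h)
  have hU : ∀ t, t < n → P t = P t₀ → P (t + 1) = P (t₀ + 1) → H (t + 1) = H t + 1 := by
    intro t htn h1 h2
    have hte : s(P t, P (t + 1)) = e := by rw [h1, h2]; exact ht₀e
    rcases eq_or_lt_of_le (Nat.find_le ⟨htn, hte⟩ : t₀ ≤ t) with h | h
    · apply hnew t htn
      rintro ⟨t', h', he''⟩
      exact hmin t' (by omega) (he''.trans hte)
    · apply hfwd t htn (by rw [hte]; exact hnc) ⟨t₀, h, ht₀e.trans hte.symm⟩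
      intro t₀' ha hb hc
      rw [hfirst t htn hte t₀' ha hb hc]
      exact h1.symm
  have hD : ∀ t, t < n → P t = P (t₀ + 1) → P (t + 1) = P t₀ → H (t + 1) = H t - 1 := by
    intro t htn h1 h2
    have hte : s(P t, P (t + 1)) = e := by rw [h1, h2, Sym2.eq_swap]; exact ht₀e
    have ht₀t : t₀ < t := by
      rcases eq_or_lt_of_le (Nat.find_le ⟨htn, hte⟩ : t₀ ≤ t) with h | h
      · rw [← h] at h1
        exact absurd h1 huv
      · exact h
    apply hbwd t htn (by rw [hte]; exact hnc) ⟨t₀, ht₀t, ht₀e.trans hte.symm⟩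
    intro t₀' ha hb hc
    rw [hfirst t htn hte t₀' ha hb hc]
    exact h2.symm
  have hcases : ∀ t, s(P t, P (t + 1)) = e →
      (P t = P t₀ ∧ P (t + 1) = P (t₀ + 1)) ∨ (P t = P (t₀ + 1) ∧ P (t + 1) = P t₀) := by
    intro t hte
    have h := hte.trans ht₀e.symm
    rw [Sym2.eq_iff] at h
    exact h
  have hup : ∀ t, t < n → s(P t, P (t + 1)) = e → (H (t + 1) = H t + 1 ↔ P t = P t₀) := by
    intro t htn hte
    rcases hcases t hte with ⟨h1, h2⟩ | ⟨h1, h2⟩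
    · simp [hU t htn h1 h2, h1]
    · have hd := hD t htn h1 h2
      constructor
      · intro h; omega
      · intro h; exact absurd (h1.symm.trans h) huv.symm
  have hdn : ∀ t, t < n → s(P t, P (t + 1)) = e → (H (t + 1) = H t - 1 ↔ P t = P (t₀ + 1)) := by
    intro t htn hte
    rcases hcases t hte with ⟨h1, h2⟩ | ⟨h1, h2⟩
    · have hu' := hU t htn h1 h2
      constructor
      · intro h; omega
      · intro h; exact absurd (h1.symm.trans h) huv
    · simp [hD t htn h1 h2, h1]
  -- bridge property
  have hAdj : (pathGraph P n).Adj (P t₀) (P (t₀ + 1)) := by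
    rw [← SimpleGraph.mem_edgeSet, ht₀e]; exact he
  have hbridge : (pathGraph P n).IsBridge s(P t₀, P (t₀ + 1)) := by
    rw [SimpleGraph.isBridge_iff_forall_cycle_notMem (by rw [ht₀e]; exact he)]
    intro w p hp hm
    exact hnc ⟨w, p, hp, ht₀e ▸ hm⟩
  have hbr : ¬ (pathGraph P n \ SimpleGraph.fromEdgeSet {e}).Reachable (P t₀) (P (t₀ + 1)) := by
    rw [← ht₀e]
    exact SimpleGraph.isBridge_iff.mp hbridge
  set f : V → ℤ := fun x =>
    if (pathGraph P n \ SimpleGraph.fromEdgeSet {e}).Reachable (P t₀) x then 1 else 0 with hf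
  have hstep : ∀ t < n, f (P (t + 1)) - f (P t)
      = (if s(P t, P (t + 1)) = e ∧ P t = P (t₀ + 1) then (1 : ℤ) else 0)
        - (if s(P t, P (t + 1)) = e ∧ P t = P t₀ then (1 : ℤ) else 0) := by
    intro t htn
    by_cases hte : s(P t, P (t + 1)) = e
    · rcases hcases t hte with ⟨h1, h2⟩ | ⟨h1, h2⟩
      · rw [h1, h2]
        rw [if_neg (fun h => huv h.2), if_pos ⟨ht₀e, rfl⟩]
        simp only [hf]
        rw [if_pos (SimpleGraph.Reachable.refl _), if_neg hbr]
      · rw [h1, h2]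
        rw [if_pos ⟨Sym2.eq_swap.trans ht₀e, rfl⟩, if_neg (fun h => huv h.2.symm)]
        simp only [hf]
        rw [if_pos (SimpleGraph.Reachable.refl _), if_neg hbr]
    · have hadj' : (pathGraph P n \ SimpleGraph.fromEdgeSet {e}).Adj (P t) (P (t + 1)) := by
        rw [SimpleGraph.sdiff_adj]
        constructor
        · rw [pathGraph, SimpleGraph.fromEdgeSet_adj]
          exact ⟨⟨t, htn, rfl⟩, (hadj t htn).ne⟩
        · rw [SimpleGraph.fromEdgeSet_adj]
          rintro ⟨hm, -⟩
          exact hte (Set.mem_singleton_iff.mp hm)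
      have hiff : (pathGraph P n \ SimpleGraph.fromEdgeSet {e}).Reachable (P t₀) (P t)
          ↔ (pathGraph P n \ SimpleGraph.fromEdgeSet {e}).Reachable (P t₀) (P (t + 1)) :=
        ⟨fun h => h.trans hadj'.reachable, fun h => h.trans hadj'.symm.reachable⟩
      rw [if_neg (fun h => hte h.1), if_neg (fun h => hte h.1)]
      simp only [hf]
      by_cases hr : (pathGraph P n \ SimpleGraph.fromEdgeSet {e}).Reachable (P t₀) (P t)
      · rw [if_pos hr, if_pos (hiff.mp hr)]; ring
      · rw [if_neg hr, if_neg (fun h => hr (hiff.mpr h))]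
  have hsum : ∑ t ∈ Finset.range n, (f (P (t + 1)) - f (P t)) = 0 := by
    rw [Finset.sum_range_sub (fun t => f (P t)), ← hclosed, sub_self]
  have hsum2 : ∑ t ∈ Finset.range n, (f (P (t + 1)) - f (P t))
      = (((Finset.range n).filter (fun t => s(P t, P (t + 1)) = e ∧ P t = P (t₀ + 1))).card : ℤ)
        - (((Finset.range n).filter (fun t => s(P t, P (t + 1)) = e ∧ P t = P t₀)).card : ℤ) := by
    rw [Finset.sum_congr rfl (fun t ht => hstep t (Finset.mem_range.mp ht)),
      Finset.sum_sub_distrib, Finset.sum_boole, Finset.sum_boole]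
  have hcard : (((Finset.range n).filter (fun t => s(P t, P (t + 1)) = e ∧ P t = P t₀)).card : ℤ)
      = (((Finset.range n).filter (fun t => s(P t, P (t + 1)) = e ∧ P t = P (t₀ + 1))).card : ℤ) := by
    have h := hsum2.symm.trans hsum
    linarith
  have hset1 : {t | t < n ∧ s(P t, P (t + 1)) = e ∧ H (t + 1) = H t + 1}
      = ↑((Finset.range n).filter (fun t => s(P t, P (t + 1)) = e ∧ P t = P t₀)) := by
    ext t
    simp only [Set.mem_setOf_eq, Finset.coe_filter, Finset.mem_range]
    constructor
    · rintro ⟨h1, h2, h3⟩; exact ⟨h1, h2, (hup t h1 h2).mp h3⟩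
    · rintro ⟨h1, h2, h3⟩; exact ⟨h1, h2, (hup t h1 h2).mpr h3⟩
  have hset2 : {t | t < n ∧ s(P t, P (t + 1)) = e ∧ H (t + 1) = H t - 1}
      = ↑((Finset.range n).filter (fun t => s(P t, P (t + 1)) = e ∧ P t = P (t₀ + 1))) := by
    ext t
    simp only [Set.mem_setOf_eq, Finset.coe_filter, Finset.mem_range]
    constructor
    · rintro ⟨h1, h2, h3⟩; exact ⟨h1, h2, (hdn t h1 h2).mp h3⟩
    · rintro ⟨h1, h2, h3⟩; exact ⟨h1, h2, (hdn t h1 h2).mpr h3⟩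
  rw [hset1, hset2, Set.ncard_coe_finset, Set.ncard_coe_finset]
  exact_mod_cast hcard
end
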